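/- Let v_i, v_j, v_k, v_l, θ_i, θ_j, θ_k, θ_l be real numbers, and for each ordered pair (a,b) define wᴿ_ab = v_a·v_b·cos(θ_a − θ_b) and wᴵ_ab = v_a·v_b·sin(θ_a − θ_b). Then wᴿ_ij·wᴿ_kl − wᴵ_ij·wᴵ_kl = wᴿ_il·wᴿ_jk + wᴵ_il·wᴵ_jk and wᴿ_ij·wᴵ_kl + wᴵ_ij·wᴿ_kl = −wᴿ_il·wᴵ_jk + wᴵ_il·wᴿ_jk. -/
import Mathlib


open Real

/-- The 4-cycle constraints in the w space: with wᴿ_ab = v_a v_b cos(θ_a − θ_b)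
and wᴵ_ab = v_a v_b sin(θ_a − θ_b), one has
wᴿ_ij·wᴿ_kl − wᴵ_ij·wᴵ_kl = wᴿ_il·wᴿ_jk + wᴵ_il·wᴵ_jk and
wᴿ_ij·wᴵ_kl + wᴵ_ij·wᴿ_kl = −wᴿ_il·wᴵ_jk + wᴵ_il·wᴿ_jk. -/
theorem w_space_4cycle (vi vj vk vl θi θj θk θl : ℝ) :
    ((vi * vj * cos (θi - θj)) * (vk * vl * cos (θk - θl))
        - (vi * vj * sin (θi - θj)) * (vk * vl * sin (θk - θl)) =
      (vi * vl * cos (θi - θl)) * (vj * vk * cos (θj - θk))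
        + (vi * vl * sin (θi - θl)) * (vj * vk * sin (θj - θk))) ∧
    ((vi * vj * cos (θi - θj)) * (vk * vl * sin (θk - θl))
        + (vi * vj * sin (θi - θj)) * (vk * vl * cos (θk - θl)) =
      -((vi * vl * cos (θi - θl)) * (vj * vk * sin (θj - θk)))
        + (vi * vl * sin (θi - θl)) * (vj * vk * cos (θj - θk))) := by
  constructor <;>
  · simp only [Real.cos_sub, Real.sin_sub]
    ring
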